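/- arXiv:2509.06016 — 4 statements merged into one kernel-verified Lean document; each statement's English description precedes it below -/
import Mathlib

section
/- Let X be a process on a probability space that, under the measure P, is a Markov chain with respect to its natural filtration F_n = σ(X_0,…,X_n) with F_{n-1}-measurable random stochastic transition matrices P_n, and that, under a second measure P_0 with the same initial distribution of X_0, is a stationary (time-homogeneous) Markov chain with a constant transition matrix P_0 satisfying P_0(i,j) > 0 for all states i,j. Then for every n the restriction of P to F_n is absolutely continuous with respect to the restriction of P_0 to F_n, and the Radon–Nikodym derivative is dP/dP_0 |_{F_n} = ∏_{k=1}^{n} P_k(X_{k-1}, X_k) / P_0(X_{k-1}, X_k), P_0-almost surely. -/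
open MeasureTheory Finset
open scoped ENNReal

/-- A (real `N × N`) stochastic matrix: nonnegative entries, each row summing to 1. -/
def IsStochasticMatrix {N : ℕ} (P : Matrix (Fin N) (Fin N) ℝ) : Prop :=
  (∀ i j, 0 ≤ P i j) ∧ ∀ i, ∑ j, P i j = 1

/-- The natural filtration `F n = σ(X 0, …, X n)` of a process `X`. -/
noncomputable def natFiltration {Ω : Type*} [m : MeasurableSpace Ω] {N : ℕ}
    (X : ℕ → Ω → Fin N) (hX : ∀ n, Measurable (X n)) : Filtration ℕ m where
  seq n := ⨆ k ∈ Set.Iic n, MeasurableSpace.comap (X k) inferInstance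
  mono' := fun _ _ hab => biSup_mono fun _ hk => le_trans hk hab
  le' := fun _ => iSup₂_le fun k _ => (hX k).comap_le

/-- Indicator (as a real-valued function) of the event `{X n = j}`. -/
def ind {Ω : Type*} {N : ℕ} (X : ℕ → Ω → Fin N) (n : ℕ) (j : Fin N) : Ω → ℝ :=
  fun ω => if X n ω = j then 1 else 0

/-- `X` is a Markov chain under `Q` with respect to the filtration `F`, with
(random, `F (n-1)`-measurable) transition matrices `P n`:
`Q(X n = j | F (n-1)) = P n (X (n-1)) j` a.s. for all `n ≥ 1` and all states `j`. -/
def IsMarkovChainWith {Ω : Type*} [m : MeasurableSpace Ω] {N : ℕ}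
    (Q : Measure Ω) (F : Filtration ℕ m) (X : ℕ → Ω → Fin N)
    (P : ℕ → Ω → Matrix (Fin N) (Fin N) ℝ) : Prop :=
  ∀ n, 1 ≤ n → ∀ j : Fin N,
    Q[ind X n j | F (n - 1)] =ᵐ[Q] fun ω => P n ω (X (n - 1) ω) j

/-- The likelihood-ratio process `Z n = ∏_{k=1}^n P k (X (k-1), X k) / P₀ (X (k-1), X k)`. -/
noncomputable def lr {Ω : Type*} {N : ℕ} (X : ℕ → Ω → Fin N)
    (P : ℕ → Ω → Matrix (Fin N) (Fin N) ℝ) (P₀ : Matrix (Fin N) (Fin N) ℝ)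
    (n : ℕ) (ω : Ω) : ℝ :=
  ∏ k ∈ Finset.Icc 1 n, P k ω (X (k - 1) ω) (X k ω) / P₀ (X (k - 1) ω) (X k ω)

lemma meas_comp2 {Ω : Type*} {G : MeasurableSpace Ω} {N : ℕ}
    {f g : Ω → Fin N} (hf : Measurable[G] f) (hg : Measurable[G] g)
    {M : Ω → Fin N → Fin N → ℝ} (hM : ∀ i j, Measurable[G] fun ω => M ω i j) :
    Measurable[G] fun ω => M ω (f ω) (g ω) := by
  have heq : (fun ω => M ω (f ω) (g ω)) =
      fun ω => ∑ i, ∑ j, if f ω = i then (if g ω = j then M ω i j else 0) else 0 := by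
    funext ω
    simp [Finset.sum_ite_eq]
  rw [heq]
  refine Finset.measurable_sum _ fun i _ => Finset.measurable_sum _ fun j _ => ?_
  exact Measurable.ite (hf (measurableSet_singleton i))
    (Measurable.ite (hg (measurableSet_singleton j)) (hM i j) measurable_const)
    measurable_const

lemma integrable_of_bound' {Ω : Type*} [m : MeasurableSpace Ω] (μ : Measure Ω) [IsFiniteMeasure μ]
    {f : Ω → ℝ} (hf : Measurable f) (C : ℝ) (h : ∀ ω, |f ω| ≤ C) : Integrable f μ :=
  Integrable.mono' (integrable_const C) hf.aestronglyMeasurable (Filter.Eventually.of_forall h)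

lemma lintegral_eq_of_density {Ω : Type*} {G : MeasurableSpace Ω} [m : MeasurableSpace Ω]
    (hG : G ≤ m) (μ ν : Measure Ω) {g : Ω → ℝ≥0∞} (hg : Measurable[G] g)
    (h : ∀ s, MeasurableSet[G] s → μ s = ∫⁻ ω in s, g ω ∂ν)
    {f : Ω → ℝ≥0∞} (hf : Measurable[G] f) :
    ∫⁻ ω, f ω ∂μ = ∫⁻ ω, f ω * g ω ∂ν := by
  have htrim : μ.trim hG = (ν.withDensity g).trim hG := by
    refine @Measure.ext Ω G _ _ fun s hs => ?_
    rw [trim_measurableSet_eq hG hs, trim_measurableSet_eq hG hs,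
      withDensity_apply _ (hG _ hs), h s hs]
  calc ∫⁻ ω, f ω ∂μ = ∫⁻ ω, f ω ∂(μ.trim hG) := (lintegral_trim hG hf).symm
    _ = ∫⁻ ω, f ω ∂((ν.withDensity g).trim hG) := by rw [htrim]
    _ = ∫⁻ ω, f ω ∂(ν.withDensity g) := lintegral_trim hG hf
    _ = ∫⁻ ω, f ω * g ω ∂ν := by
        rw [lintegral_withDensity_eq_lintegral_mul ν (hg.mono hG le_rfl) (hf.mono hG le_rfl)]
        simp [mul_comm]

/-- If `X` is, under `P`, a Markov chain with respect to its natural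
filtration with `F (n-1)`-measurable random stochastic transition matrices `Pn n`, and
under `P₀` (with the same initial distribution) a stationary Markov chain with constant
transition matrix `P₀mat` having strictly positive entries, then for every `n` the
restriction of `P` to `F n` is absolutely continuous with respect to that of `P₀`, with
density `∏_{k=1}^n Pn k (X (k-1), X k) / P₀mat (X (k-1), X k)`. -/
theorem discrete_girsanov_sufficiency
    {Ω : Type*} [m : MeasurableSpace Ω] {N : ℕ} (hN : 1 ≤ N)
    (X : ℕ → Ω → Fin N) (hX : ∀ n, Measurable (X n))
    (P P₀ : Measure Ω) [IsProbabilityMeasure P] [IsProbabilityMeasure P₀]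
    (Pn : ℕ → Ω → Matrix (Fin N) (Fin N) ℝ) (P₀mat : Matrix (Fin N) (Fin N) ℝ)
    (hPn_meas : ∀ n, 1 ≤ n → ∀ i j,
      Measurable[(natFiltration X hX) (n - 1)] fun ω => Pn n ω i j)
    (hPn_stoch : ∀ n, 1 ≤ n → ∀ ω, IsStochasticMatrix (Pn n ω))
    (hP₀_stoch : IsStochasticMatrix P₀mat)
    (hP₀_pos : ∀ i j, 0 < P₀mat i j)
    (hMarkov : IsMarkovChainWith P (natFiltration X hX) X Pn)
    (hMarkov₀ : IsMarkovChainWith P₀ (natFiltration X hX) X fun _ _ => P₀mat)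
    (hInit : P.map (X 0) = P₀.map (X 0)) :
    ∀ n : ℕ,
      P.trim ((natFiltration X hX).le n) ≪ P₀.trim ((natFiltration X hX).le n) ∧
      ∀ s : Set Ω, MeasurableSet[(natFiltration X hX) n] s →
        P s = ∫⁻ ω in s, ENNReal.ofReal (lr X Pn P₀mat n ω) ∂P₀ := by
  set F := natFiltration X hX with hF
  -- basic measurability facts
  have hFdef : ∀ n, F n = ⨆ k ∈ Set.Iic n, MeasurableSpace.comap (X k) inferInstance :=
    fun n => rfl
  have hcomap_le : ∀ k n, k ≤ n → MeasurableSpace.comap (X k) inferInstance ≤ F n := by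
    intro k n hk
    rw [hFdef]
    exact le_iSup₂ (f := fun k (_ : k ∈ Set.Iic n) =>
      MeasurableSpace.comap (X k) inferInstance) k hk
  have hXF : ∀ k n, k ≤ n → Measurable[F n] (X k) := fun k n hk =>
    measurable_iff_comap_le.mpr (hcomap_le k n hk)
  -- uniform bound on inverse entries of P₀mat
  set C0 : ℝ := ∑ i, ∑ j, (P₀mat i j)⁻¹ with hC0def
  have hC0 : ∀ a b, (P₀mat a b)⁻¹ ≤ C0 := by
    intro a b
    calc (P₀mat a b)⁻¹ ≤ ∑ j, (P₀mat a j)⁻¹ :=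
          Finset.single_le_sum (fun j _ => le_of_lt (inv_pos.mpr (hP₀_pos a j)))
            (Finset.mem_univ b)
      _ ≤ C0 := Finset.single_le_sum
          (fun i _ => Finset.sum_nonneg fun j _ => le_of_lt (inv_pos.mpr (hP₀_pos i j)))
          (Finset.mem_univ a)
  have hC0_nonneg : 0 ≤ C0 :=
    Finset.sum_nonneg fun i _ => Finset.sum_nonneg fun j _ =>
      le_of_lt (inv_pos.mpr (hP₀_pos i j))
  -- lr basic properties
  have hlr_nonneg : ∀ n ω, 0 ≤ lr X Pn P₀mat n ω := by
    intro n ω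
    refine Finset.prod_nonneg fun k hk => ?_
    have hk1 : 1 ≤ k := (Finset.mem_Icc.mp hk).1
    exact div_nonneg ((hPn_stoch k hk1 ω).1 _ _) (le_of_lt (hP₀_pos _ _))
  have hlr_le : ∀ n ω, lr X Pn P₀mat n ω ≤ C0 ^ n := by
    intro n ω
    have : lr X Pn P₀mat n ω ≤ ∏ _k ∈ Finset.Icc 1 n, C0 := by
      refine Finset.prod_le_prod (fun k hk => ?_) (fun k hk => ?_)
      · have hk1 : 1 ≤ k := (Finset.mem_Icc.mp hk).1
        exact div_nonneg ((hPn_stoch k hk1 ω).1 _ _) (le_of_lt (hP₀_pos _ _))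
      · have hk1 : 1 ≤ k := (Finset.mem_Icc.mp hk).1
        have h1 : Pn k ω (X (k-1) ω) (X k ω) ≤ 1 := by
          have := (hPn_stoch k hk1 ω).2 (X (k-1) ω)
          calc Pn k ω (X (k-1) ω) (X k ω) ≤ ∑ j, Pn k ω (X (k-1) ω) j :=
                Finset.single_le_sum (fun j _ => (hPn_stoch k hk1 ω).1 _ j)
                  (Finset.mem_univ _)
            _ = 1 := this
        calc Pn k ω (X (k-1) ω) (X k ω) / P₀mat (X (k-1) ω) (X k ω)
            ≤ 1 / P₀mat (X (k-1) ω) (X k ω) := by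
              exact div_le_div_of_nonneg_right h1 (hP₀_pos _ _).le
          _ = (P₀mat (X (k-1) ω) (X k ω))⁻¹ := one_div _
          _ ≤ C0 := hC0 _ _
    calc lr X Pn P₀mat n ω ≤ ∏ _k ∈ Finset.Icc 1 n, C0 := this
      _ = C0 ^ (Finset.Icc 1 n).card := Finset.prod_const C0
      _ = C0 ^ n := by rw [Nat.card_Icc]; norm_num
  have hlr_measF : ∀ n, Measurable[F n] (lr X Pn P₀mat n) := by
    intro n
    refine Finset.measurable_prod _ fun k hk => ?_
    have hk1 : 1 ≤ k := (Finset.mem_Icc.mp hk).1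
    have hkn : k ≤ n := (Finset.mem_Icc.mp hk).2
    refine meas_comp2 (hXF (k-1) n (le_trans (Nat.sub_le k 1) hkn)) (hXF k n hkn)
      (M := fun ω i j => Pn k ω i j / P₀mat i j) (fun i j => ?_)
    exact ((hPn_meas k hk1 i j).mono (F.mono (by omega : k - 1 ≤ n)) le_rfl).div
      measurable_const
  -- main claim by induction
  have key : ∀ n, ∀ s : Set Ω, MeasurableSet[F n] s →
      P s = ∫⁻ ω in s, ENNReal.ofReal (lr X Pn P₀mat n ω) ∂P₀ := by
    intro n
    induction n with
    | zero =>
      intro s hs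
      have hlr0 : ∀ ω, lr X Pn P₀mat 0 ω = 1 := by
        intro ω; unfold lr
        rw [Finset.Icc_eq_empty (by omega), Finset.prod_empty]
      have hPP₀ : P s = P₀ s := by
        have hF0 : F 0 ≤ MeasurableSpace.comap (X 0) inferInstance := by
          rw [hFdef]
          exact iSup₂_le fun k hk => by
            have : k = 0 := Nat.le_zero.mp hk
            subst this; exact le_rfl
        obtain ⟨u, -, hu⟩ := hF0 s hs
        subst hu
        rw [← Measure.map_apply (hX 0) trivial, ← Measure.map_apply (hX 0) trivial, hInit]
      simp only [hlr0, ENNReal.ofReal_one]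
      rw [hPP₀, setLIntegral_one]
    | succ mm ih =>
      -- notation
      set lrm := lr X Pn P₀mat mm with hlrm
      have hGm : F mm ≤ m := F.le mm
      have hXmm : Measurable[F mm] (X mm) := hXF mm mm le_rfl
      have he_meas : ∀ j : Fin N, MeasurableSet (X (mm+1) ⁻¹' {j}) :=
        fun j => hX (mm+1) (measurableSet_singleton j)
      haveI : SigmaFinite (P.trim hGm) := by
        have : IsFiniteMeasure (P.trim hGm) := by
          constructor
          rw [trim_measurableSet_eq hGm MeasurableSet.univ]
          exact measure_lt_top P _
        infer_instance
      haveI : SigmaFinite (P₀.trim hGm) := by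
        have : IsFiniteMeasure (P₀.trim hGm) := by
          constructor
          rw [trim_measurableSet_eq hGm MeasurableSet.univ]
          exact measure_lt_top P₀ _
        infer_instance
      -- the key claim for generating sets
      have claim : ∀ t : Set Ω, MeasurableSet[F mm] t → ∀ j : Fin N,
          P (t ∩ X (mm+1) ⁻¹' {j}) =
            ∫⁻ ω in t ∩ X (mm+1) ⁻¹' {j},
              ENNReal.ofReal (lr X Pn P₀mat (mm+1) ω) ∂P₀ := by
        intro t ht j
        set q : Ω → ℝ := fun ω => Pn (mm+1) ω (X mm ω) j with hq
        set p : Ω → ℝ := fun ω => P₀mat (X mm ω) j with hp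
        set r : Ω → ℝ := fun ω => q ω / p ω with hr
        have hq_meas : Measurable[F mm] q := by
          refine meas_comp2 hXmm (measurable_const (a := j))
            (M := fun ω i j' => Pn (mm+1) ω i j') (fun i j' => ?_)
          exact (hPn_meas (mm+1) (by omega) i j')
        have hp_meas : Measurable[F mm] p :=
          meas_comp2 hXmm (measurable_const (a := j))
            (M := fun _ i j' => P₀mat i j') (fun i j' => measurable_const)
        have hr_meas : Measurable[F mm] r := hq_meas.div hp_meas
        have hq_nonneg : ∀ ω, 0 ≤ q ω := fun ω => (hPn_stoch (mm+1) (by omega) ω).1 _ _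
        have hq_le_one : ∀ ω, q ω ≤ 1 := by
          intro ω
          calc q ω ≤ ∑ j', Pn (mm+1) ω (X mm ω) j' :=
              Finset.single_le_sum (fun j' _ => (hPn_stoch (mm+1) (by omega) ω).1 _ j')
                (Finset.mem_univ _)
            _ = 1 := (hPn_stoch (mm+1) (by omega) ω).2 _
        have hp_pos : ∀ ω, 0 < p ω := fun ω => hP₀_pos _ _
        have hr_nonneg : ∀ ω, 0 ≤ r ω := fun ω =>
          div_nonneg (hq_nonneg ω) (le_of_lt (hp_pos ω))
        have hr_le : ∀ ω, r ω ≤ C0 := by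
          intro ω
          calc r ω ≤ 1 / p ω := div_le_div_of_nonneg_right (hq_le_one ω) (hp_pos ω).le
            _ = (p ω)⁻¹ := one_div _
            _ ≤ C0 := hC0 _ _
        have hindf_meas : Measurable (ind X (mm+1) j) := by
          unfold ind
          exact Measurable.ite (hX (mm+1) (measurableSet_singleton j))
            measurable_const measurable_const
        have hindf_bd : ∀ ω, |ind X (mm+1) j ω| ≤ 1 := by
          intro ω; unfold ind; split <;> simp
        have hindf_intP : Integrable (ind X (mm+1) j) P :=
          integrable_of_bound' P hindf_meas 1 hindf_bd
        have hindf_intP₀ : Integrable (ind X (mm+1) j) P₀ :=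
          integrable_of_bound' P₀ hindf_meas 1 hindf_bd
        have hind_eq : ind X (mm+1) j = (X (mm+1) ⁻¹' {j}).indicator (fun _ => (1:ℝ)) := by
          funext ω
          by_cases h : X (mm+1) ω = j <;>
            simp [ind, Set.indicator_apply, Set.mem_preimage, h]
        -- bounds for lrm
        have hlrm_nonneg : ∀ ω, 0 ≤ lrm ω := hlr_nonneg mm
        have hlrm_le : ∀ ω, lrm ω ≤ C0 ^ mm := hlr_le mm
        have hlrm_measm : Measurable lrm := (hlr_measF mm).mono hGm le_rfl
        have hq_measm : Measurable q := hq_meas.mono hGm le_rfl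
        have hr_measm : Measurable r := hr_meas.mono hGm le_rfl
        have hg_meas : Measurable[F mm] (fun ω => lrm ω * r ω) := (hlr_measF mm).mul hr_meas
        have hg_measm : Measurable (fun ω => lrm ω * r ω) := hlrm_measm.mul hr_measm
        have hg_nonneg : ∀ ω, 0 ≤ lrm ω * r ω := fun ω =>
          mul_nonneg (hlrm_nonneg ω) (hr_nonneg ω)
        have hg_bd : ∀ ω, |lrm ω * r ω| ≤ C0 ^ mm * C0 := by
          intro ω
          rw [abs_of_nonneg (hg_nonneg ω)]
          exact mul_le_mul (hlrm_le ω) (hr_le ω) (hr_nonneg ω) (le_trans (hlrm_nonneg ω) (hlrm_le ω))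
        have hg_int : Integrable (fun ω => lrm ω * r ω) P₀ :=
          integrable_of_bound' P₀ hg_measm _ hg_bd
        have hgind_int : Integrable ((fun ω => lrm ω * r ω) * ind X (mm+1) j) P₀ := by
          refine integrable_of_bound' P₀ (hg_measm.mul hindf_meas) (C0 ^ mm * C0) ?_
          intro ω
          simp only [Pi.mul_apply]
          rw [abs_mul]
          calc |lrm ω * r ω| * |ind X (mm+1) j ω| ≤ (C0 ^ mm * C0) * 1 :=
              mul_le_mul (hg_bd ω) (hindf_bd ω) (abs_nonneg _)
                (le_trans (abs_nonneg _) (hg_bd ω))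
            _ = C0 ^ mm * C0 := mul_one _
        have hq_intP : Integrable q P := by
          refine integrable_of_bound' P hq_measm 1 fun ω => ?_
          rw [abs_of_nonneg (hq_nonneg ω)]; exact hq_le_one ω
        -- LHS chain
        have h1 : ∫ ω in t, ind X (mm+1) j ω ∂P = (P (t ∩ X (mm+1) ⁻¹' {j})).toReal := by
          rw [hind_eq, setIntegral_indicator (he_meas j), setIntegral_const]
          simp
          rfl
        have h2 : ∫ ω in t, ind X (mm+1) j ω ∂P = ∫ ω in t, q ω ∂P := by
          rw [← setIntegral_condExp hGm hindf_intP ht]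
          refine setIntegral_congr_ae (hGm t ht) ?_
          exact (hMarkov (mm+1) (by omega) j).mono fun ω h _ => h
        have h3 : ENNReal.ofReal (∫ ω in t, q ω ∂P) = ∫⁻ ω in t, ENNReal.ofReal (q ω) ∂P :=
          ofReal_integral_eq_lintegral_ofReal hq_intP.restrict
            (Filter.Eventually.of_forall hq_nonneg)
        have h4 : ∫⁻ ω in t, ENNReal.ofReal (q ω) ∂P
            = ∫⁻ ω in t, ENNReal.ofReal (q ω) * ENNReal.ofReal (lrm ω) ∂P₀ := by
          have hfm : Measurable[F mm] (t.indicator (fun ω => ENNReal.ofReal (q ω))) :=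
            (hq_meas.ennreal_ofReal).indicator ht
          have := lintegral_eq_of_density hGm P P₀ ((hlr_measF mm).ennreal_ofReal) ih hfm
          rw [← lintegral_indicator (hGm t ht), ← lintegral_indicator (hGm t ht)]
          rw [show (fun ω => (t.indicator (fun ω' => ENNReal.ofReal (q ω')) ω)
              * ENNReal.ofReal (lrm ω))
              = t.indicator (fun ω => ENNReal.ofReal (q ω) * ENNReal.ofReal (lrm ω)) from ?_] at this
          · exact this
          · funext ω
            by_cases hω : ω ∈ t <;> simp [Set.indicator_apply, hω]
        -- RHS chain
        have h5 : ∫⁻ ω in t ∩ X (mm+1) ⁻¹' {j}, ENNReal.ofReal (lr X Pn P₀mat (mm+1) ω) ∂P₀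
            = ∫⁻ ω in t ∩ X (mm+1) ⁻¹' {j}, ENNReal.ofReal (lrm ω * r ω) ∂P₀ := by
          refine setLIntegral_congr_fun ((hGm t ht).inter (he_meas j))
            (fun ω hω => ?_)
          have hXω : X (mm+1) ω = j := hω.2
          have hsucc : lr X Pn P₀mat (mm+1) ω = lrm ω *
              (Pn (mm+1) ω (X mm ω) (X (mm+1) ω) / P₀mat (X mm ω) (X (mm+1) ω)) := by
            unfold lr
            rw [Finset.prod_Icc_succ_top (by omega : 1 ≤ mm + 1)]
            rfl
          rw [hsucc, hXω]
        have h7 : (fun ω => (lrm ω * r ω) * ind X (mm+1) j ω)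
            = (X (mm+1) ⁻¹' {j}).indicator (fun ω => lrm ω * r ω) := by
          funext ω
          by_cases h : X (mm+1) ω = j <;> simp [ind, Set.indicator_apply, h]
        have h6 : ∫⁻ ω in t ∩ X (mm+1) ⁻¹' {j}, ENNReal.ofReal (lrm ω * r ω) ∂P₀
            = ENNReal.ofReal (∫ ω in t, (lrm ω * r ω) * ind X (mm+1) j ω ∂P₀) := by
          rw [show (∫ ω in t, (lrm ω * r ω) * ind X (mm+1) j ω ∂P₀)
              = ∫ ω in t ∩ X (mm+1) ⁻¹' {j}, lrm ω * r ω ∂P₀ from ?_]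
          · exact (ofReal_integral_eq_lintegral_ofReal (hg_int.restrict)
              (Filter.Eventually.of_forall hg_nonneg)).symm
          · rw [← setIntegral_indicator (he_meas j)]
            exact setIntegral_congr_ae (hGm t ht)
              (Filter.Eventually.of_forall fun ω _ => congrFun h7 ω)
        have h8 : ∫ ω in t, (lrm ω * r ω) * ind X (mm+1) j ω ∂P₀
            = ∫ ω in t, (lrm ω * r ω) * p ω ∂P₀ := by
          have hpull : P₀[(fun ω => lrm ω * r ω) * ind X (mm+1) j | F mm]
              =ᵐ[P₀] fun ω => (lrm ω * r ω) * p ω := by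
            have h := condExp_mul_of_stronglyMeasurable_left (m := F mm) (μ := P₀)
              (hg_meas.stronglyMeasurable) hgind_int hindf_intP₀
            refine h.trans ?_
            have h0 := hMarkov₀ (mm+1) (by omega) j
            simp only [Nat.add_sub_cancel] at h0
            filter_upwards [h0] with ω hω
            simp only [Pi.mul_apply]
            rw [hω]
          have hce : (∫ ω in t, (lrm ω * r ω) * ind X (mm+1) j ω ∂P₀)
              = ∫ ω in t, (P₀[(fun ω => lrm ω * r ω) * ind X (mm+1) j | F mm]) ω ∂P₀ :=
            (setIntegral_condExp hGm hgind_int ht).symm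
          rw [hce]
          exact setIntegral_congr_ae (hGm t ht) (hpull.mono fun ω h _ => h)
        have h9 : ∀ ω, (lrm ω * r ω) * p ω = lrm ω * q ω := by
          intro ω
          rw [hr, mul_assoc, div_mul_cancel₀ _ (ne_of_gt (hp_pos ω))]
        have h10 : ENNReal.ofReal (∫ ω in t, lrm ω * q ω ∂P₀)
            = ∫⁻ ω in t, ENNReal.ofReal (q ω) * ENNReal.ofReal (lrm ω) ∂P₀ := by
          have hint : Integrable (fun ω => lrm ω * q ω) P₀ := by
            refine integrable_of_bound' P₀ (hlrm_measm.mul hq_measm) (C0 ^ mm) fun ω => ?_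
            rw [abs_of_nonneg (mul_nonneg (hlrm_nonneg ω) (hq_nonneg ω))]
            calc lrm ω * q ω ≤ C0 ^ mm * 1 :=
                mul_le_mul (hlrm_le ω) (hq_le_one ω) (hq_nonneg ω)
                  (le_trans (hlrm_nonneg ω) (hlrm_le ω))
              _ = C0 ^ mm := mul_one _
          rw [ofReal_integral_eq_lintegral_ofReal hint.restrict
            (Filter.Eventually.of_forall fun ω => mul_nonneg (hlrm_nonneg ω) (hq_nonneg ω))]
          refine setLIntegral_congr_fun (hGm t ht)
            (fun ω _ => ?_)
          rw [ENNReal.ofReal_mul (hlrm_nonneg ω), mul_comm]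
        -- assemble
        calc P (t ∩ X (mm+1) ⁻¹' {j})
            = ENNReal.ofReal ((P (t ∩ X (mm+1) ⁻¹' {j})).toReal) :=
              (ENNReal.ofReal_toReal (measure_ne_top P _)).symm
          _ = ENNReal.ofReal (∫ ω in t, ind X (mm+1) j ω ∂P) := by rw [h1]
          _ = ENNReal.ofReal (∫ ω in t, q ω ∂P) := by rw [h2]
          _ = ∫⁻ ω in t, ENNReal.ofReal (q ω) ∂P := h3
          _ = ∫⁻ ω in t, ENNReal.ofReal (q ω) * ENNReal.ofReal (lrm ω) ∂P₀ := h4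
          _ = ENNReal.ofReal (∫ ω in t, lrm ω * q ω ∂P₀) := h10.symm
          _ = ENNReal.ofReal (∫ ω in t, (lrm ω * r ω) * p ω ∂P₀) := by
              congr 1; exact setIntegral_congr_ae (hGm t ht)
                (Filter.Eventually.of_forall fun ω _ => (h9 ω).symm)
          _ = ENNReal.ofReal (∫ ω in t, (lrm ω * r ω) * ind X (mm+1) j ω ∂P₀) := by rw [h8]
          _ = ∫⁻ ω in t ∩ X (mm+1) ⁻¹' {j}, ENNReal.ofReal (lrm ω * r ω) ∂P₀ := h6.symm
          _ = ∫⁻ ω in t ∩ X (mm+1) ⁻¹' {j},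
                ENNReal.ofReal (lr X Pn P₀mat (mm+1) ω) ∂P₀ := h5.symm
      -- π-system argument
      set D : Set (Set Ω) :=
        {s | ∃ t, MeasurableSet[F mm] t ∧ ∃ j : Fin N, s = t ∩ X (mm+1) ⁻¹' {j}} with hD
      have hD_pi : IsPiSystem D := by
        rintro s₁ ⟨t₁, ht₁, j₁, rfl⟩ s₂ ⟨t₂, ht₂, j₂, rfl⟩ _
        by_cases hj : j₁ = j₂
        · subst hj
          exact ⟨t₁ ∩ t₂, ht₁.inter ht₂, j₁, by ext ω; simp; tauto⟩
        · refine ⟨∅, @MeasurableSet.empty _ (F mm), j₁, ?_⟩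
          ext ω
          simp only [Set.mem_inter_iff, Set.mem_preimage, Set.mem_singleton_iff,
            Set.empty_inter, Set.mem_empty_iff_false, iff_false]
          rintro ⟨⟨-, h1⟩, -, h2⟩
          exact hj (h1 ▸ h2)
      have hgen : F (mm+1) = MeasurableSpace.generateFrom D := by
        refine le_antisymm ?_ ?_
        · rw [hFdef]
          refine iSup₂_le fun k hk => ?_
          rcases Nat.lt_or_ge k (mm+1) with hk' | hk'
          · -- k ≤ mm : comap (X k) ≤ F mm ≤ generateFrom D
            have hkm : k ≤ mm := by omega
            refine le_trans (hcomap_le k mm hkm) ?_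
            intro t ht
            have : t = ⋃ j : Fin N, t ∩ X (mm+1) ⁻¹' {j} := by
              ext ω
              simp only [Set.mem_iUnion, Set.mem_inter_iff, Set.mem_preimage,
                Set.mem_singleton_iff]
              exact ⟨fun h => ⟨X (mm+1) ω, h, rfl⟩, fun ⟨j, h, _⟩ => h⟩
            rw [this]
            exact MeasurableSet.iUnion fun j =>
              MeasurableSpace.measurableSet_generateFrom ⟨t, ht, j, rfl⟩
          · have hkeq : k = mm + 1 := le_antisymm hk hk'
            subst hkeq
            rw [← measurable_iff_comap_le]
            refine @measurable_to_countable' (Fin N) Ω _ _ (MeasurableSpace.generateFrom D) _ fun j => ?_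
            exact MeasurableSpace.measurableSet_generateFrom
              ⟨Set.univ, MeasurableSet.univ, j, by simp⟩
        · refine MeasurableSpace.generateFrom_le ?_
          rintro s ⟨t, ht, j, rfl⟩
          exact MeasurableSet.inter (F.mono (Nat.le_succ mm) t ht)
            ((hXF (mm+1) (mm+1) le_rfl) (measurableSet_singleton j))
      intro s hs
      set wd : Measure Ω := P₀.withDensity (fun ω => ENNReal.ofReal (lr X Pn P₀mat (mm+1) ω))
        with hwd
      have hwd_apply : ∀ u : Set Ω, MeasurableSet u →
          wd u = ∫⁻ ω in u, ENNReal.ofReal (lr X Pn P₀mat (mm+1) ω) ∂P₀ :=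
        fun u hu => withDensity_apply _ hu
      have hD_eq : ∀ s' ∈ D, P s' = wd s' := by
        rintro s' ⟨t, ht, j, rfl⟩
        rw [hwd_apply _ ((hGm t ht).inter (he_meas j))]
        exact claim t ht j
      have huniv : P Set.univ = wd Set.univ := by
        have hcover : (Set.univ : Set Ω) = ⋃ j : Fin N, Set.univ ∩ X (mm+1) ⁻¹' {j} := by
          ext ω
          simp only [Set.mem_univ, true_iff, Set.mem_iUnion, Set.univ_inter,
            Set.mem_preimage, Set.mem_singleton_iff]
          exact ⟨X (mm+1) ω, rfl⟩
        have hdis : Pairwise (Function.onFun Disjoint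
            fun j : Fin N => Set.univ ∩ X (mm+1) ⁻¹' {j}) := by
          intro i j hij
          simp only [Function.onFun, Set.univ_inter]
          refine Set.disjoint_left.mpr fun ω h1 h2 => ?_
          exact hij (by rw [← h1, ← h2])
        have hmeas : ∀ j : Fin N, MeasurableSet (Set.univ ∩ X (mm+1) ⁻¹' {j}) :=
          fun j => MeasurableSet.univ.inter (he_meas j)
        rw [hcover, measure_iUnion hdis hmeas, measure_iUnion hdis hmeas]
        exact tsum_congr fun j => hD_eq _ ⟨Set.univ, MeasurableSet.univ, j, rfl⟩
      have := ext_on_measurableSpace_of_generate_finite m D hD_eq (F.le (mm+1)) hgen hD_pi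
        huniv hs
      rw [this, hwd_apply s (F.le (mm+1) s hs)]
  intro n
  refine ⟨?_, key n⟩
  refine Measure.AbsolutelyContinuous.mk fun s hs h0 => ?_
  rw [trim_measurableSet_eq (F.le n) hs] at h0 ⊢
  rw [key n s hs, setLIntegral_measure_zero s _ h0]
end

section
/- Let X be a process on a probability space that, under a measure P_0, is a stationary Markov chain with respect to its natural filtration F_n = σ(X_0,…,X_n) with constant transition matrix P_0 satisfying P_0(i,j) > 0 for all states i,j. Let P be a probability measure with P ≪ P_0 on σ(X_n : n ∈ ℕ) and with the same initial distribution of X_0. Then there exist F_{n-1}-measurable random stochastic matrices P_n (n ≥ 1) such that X is a Markov chain with transition matrices (P_n) with respect to (F_n) under P, and for every n, dP/dP_0 |_{F_n} = ∏_{k=1}^{n} P_k(X_{k-1}, X_k) / P_0(X_{k-1}, X_k), P_0-almost surely. -/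
open MeasureTheory Finset

namespace DGaux
set_option linter.unusedSectionVars false

variable {Ω : Type*} [m : MeasurableSpace Ω] {N : ℕ}

/-- Cylinder set determined by the values of `X 0, …, X n`. -/
def cyl (X : ℕ → Ω → Fin N) (n : ℕ) (y : ℕ → Fin N) : Set Ω := {ω | ∀ k ≤ n, X k ω = y k}

lemma mem_cyl {X : ℕ → Ω → Fin N} {n : ℕ} {y : ℕ → Fin N} {ω : Ω} :
    ω ∈ cyl X n y ↔ ∀ k ≤ n, X k ω = y k := Iff.rfl

lemma cyl_congr {X : ℕ → Ω → Fin N} {n : ℕ} {y z : ℕ → Fin N}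
    (h : ∀ k ≤ n, y k = z k) : cyl X n y = cyl X n z :=
  Set.ext fun _ => forall₂_congr fun k hk => by rw [h k hk]

lemma cyl_mono {X : ℕ → Ω → Fin N} {n n' : ℕ} (h : n ≤ n') (y : ℕ → Fin N) :
    cyl X n' y ⊆ cyl X n y := fun _ hω k hk => hω k (hk.trans h)

lemma measurableSet_cyl (X : ℕ → Ω → Fin N) (hX : ∀ n, Measurable (X n)) (n : ℕ)
    (y : ℕ → Fin N) : MeasurableSet (cyl X n y) := by
  have h : cyl X n y = ⋂ k ∈ Set.Iic n, X k ⁻¹' {y k} := by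
    ext ω; simp [cyl]
  rw [h]
  exact MeasurableSet.biInter (Set.to_countable _) fun k _ => (hX k) (measurableSet_singleton _)

lemma measurableSet_cyl' (X : ℕ → Ω → Fin N) (hX : ∀ n, Measurable (X n)) (n : ℕ)
    (y : ℕ → Fin N) : MeasurableSet[natFiltration X hX n] (cyl X n y) := by
  have h : cyl X n y = ⋂ k ∈ Set.Iic n, X k ⁻¹' {y k} := by
    ext ω; simp [cyl]
  rw [h]
  refine MeasurableSet.biInter (Set.to_countable _) fun k hk => ?_
  have h1 : MeasurableSpace.comap (X k) inferInstance ≤ (natFiltration X hX n : MeasurableSpace Ω) :=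
    le_iSup₂ (f := fun k (_ : k ∈ Set.Iic n) => MeasurableSpace.comap (X k) inferInstance) k hk
  exact h1 _ ⟨{y k}, measurableSet_singleton _, rfl⟩

lemma natFiltration_eq (X : ℕ → Ω → Fin N) (hX : ∀ n, Measurable (X n)) (n : ℕ) :
    (natFiltration X hX n : MeasurableSpace Ω) =
      MeasurableSpace.comap (fun ω (k : Fin (n + 1)) => X k ω) inferInstance := by
  apply le_antisymm
  · refine iSup₂_le fun k hk => ?_
    have hk' : k < n + 1 := Nat.lt_succ_of_le hk
    have h1 : X k = (fun v : Fin (n + 1) → Fin N => v ⟨k, hk'⟩) ∘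
        (fun ω (k : Fin (n + 1)) => X k ω) := rfl
    calc MeasurableSpace.comap (X k) inferInstance
        = MeasurableSpace.comap (fun ω (k : Fin (n + 1)) => X (k : ℕ) ω)
            (MeasurableSpace.comap (fun v : Fin (n + 1) → Fin N => v ⟨k, hk'⟩) inferInstance) := by
          rw [MeasurableSpace.comap_comp]; rfl
      _ ≤ MeasurableSpace.comap (fun ω (k : Fin (n + 1)) => X (k : ℕ) ω) inferInstance :=
          MeasurableSpace.comap_mono (measurable_pi_apply _).comap_le
  · rw [show (inferInstance : MeasurableSpace (Fin (n + 1) → Fin N)) = MeasurableSpace.pi from rfl,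
      MeasurableSpace.pi, MeasurableSpace.comap_iSup]
    refine iSup_le fun k => ?_
    rw [MeasurableSpace.comap_comp]
    have hco : ((fun b : Fin (n + 1) → Fin N => b k) ∘ fun ω (k : Fin (n + 1)) => X (k : ℕ) ω)
        = X (k : ℕ) := rfl
    rw [hco]
    exact le_iSup₂ (f := fun k' (_ : k' ∈ Set.Iic n) => MeasurableSpace.comap (X k') inferInstance)
      (k : ℕ) (Nat.lt_succ_iff.mp k.isLt)

/-- Extension of a finite vector to an infinite path. -/
def extv {n : ℕ} (v : Fin (n + 1) → Fin N) : ℕ → Fin N :=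
  fun k => if h : k < n + 1 then v ⟨k, h⟩ else v 0

lemma extv_eq {n : ℕ} (v : Fin (n + 1) → Fin N) {k : ℕ} (h : k < n + 1) :
    extv v k = v ⟨k, h⟩ := dif_pos h

lemma exists_rep {X : ℕ → Ω → Fin N} {hX : ∀ n, Measurable (X n)} {n : ℕ} {s : Set Ω}
    (hs : MeasurableSet[natFiltration X hX n] s) :
    ∃ V : Finset (Fin (n + 1) → Fin N), s = ⋃ v ∈ V, cyl X n (extv v) := by
  rw [natFiltration_eq] at hs
  obtain ⟨S, -, rfl⟩ := hs
  refine ⟨(Set.toFinite S).toFinset, ?_⟩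
  ext ω
  simp only [Set.mem_preimage, Set.mem_iUnion, Set.Finite.mem_toFinset, exists_prop]
  constructor
  · intro hmem
    refine ⟨fun k => X k ω, hmem, fun k hk => ?_⟩
    rw [extv_eq _ (Nat.lt_succ_of_le hk)]
  · rintro ⟨v, hv, hω⟩
    have h2 : (fun k : Fin (n + 1) => X k ω) = v := funext fun k => by
      have := hω k (Nat.lt_succ_iff.mp k.isLt)
      rwa [extv_eq _ k.isLt, Fin.eta] at this
    rwa [h2]

lemma cyl_disjoint {X : ℕ → Ω → Fin N} {n : ℕ} {y z : ℕ → Fin N} (k : ℕ) (hk : k ≤ n)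
    (h : y k ≠ z k) : Disjoint (cyl X n y) (cyl X n z) :=
  Set.disjoint_left.mpr fun _ hy hz => h ((hy k hk).symm.trans (hz k hk))

lemma extv_pairwise (X : ℕ → Ω → Fin N) {n : ℕ} (V : Finset (Fin (n + 1) → Fin N)) :
    Set.Pairwise (↑V : Set (Fin (n + 1) → Fin N)) (Function.onFun Disjoint fun v => cyl X n (extv v)) := by
  intro v _ w _ hvw
  obtain ⟨a, ha⟩ := Function.ne_iff.mp hvw
  refine cyl_disjoint (a : ℕ) (Nat.lt_succ_iff.mp a.isLt) ?_
  rw [extv_eq _ a.isLt, extv_eq _ a.isLt, Fin.eta]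
  exact ha


/-- Probability of a cylinder, as a real number. -/
noncomputable def pr (Q : Measure Ω) (X : ℕ → Ω → Fin N) (n : ℕ) (y : ℕ → Fin N) : ℝ :=
  (Q (cyl X n y)).toReal

lemma pr_nonneg (Q : Measure Ω) (X : ℕ → Ω → Fin N) (n : ℕ) (y : ℕ → Fin N) :
    0 ≤ pr Q X n y := ENNReal.toReal_nonneg

lemma pr_congr (Q : Measure Ω) (X : ℕ → Ω → Fin N) {n : ℕ} {y z : ℕ → Fin N}
    (h : ∀ k ≤ n, y k = z k) : pr Q X n y = pr Q X n z := by
  unfold pr; rw [cyl_congr h]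

lemma pr_mono (Q : Measure Ω) [IsFiniteMeasure Q] (X : ℕ → Ω → Fin N) {n n' : ℕ}
    (h : n ≤ n') (y : ℕ → Fin N) : pr Q X n' y ≤ pr Q X n y :=
  ENNReal.toReal_mono (measure_ne_top _ _) (measure_mono (cyl_mono h y))

lemma meas_cyl_eq_zero {Q : Measure Ω} [IsFiniteMeasure Q] {X : ℕ → Ω → Fin N} {n : ℕ}
    {y : ℕ → Fin N} (h : pr Q X n y = 0) : Q (cyl X n y) = 0 := by
  have := ENNReal.toReal_eq_zero_iff (Q (cyl X n y))
  rw [pr] at h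
  rcases this.mp h with h' | h'
  · exact h'
  · exact absurd h' (measure_ne_top _ _)

lemma pr_zero_mono {Q : Measure Ω} [IsFiniteMeasure Q] {X : ℕ → Ω → Fin N} {n n' : ℕ}
    (h : n ≤ n') {y : ℕ → Fin N} (h0 : pr Q X n y = 0) : pr Q X n' y = 0 := by
  unfold pr
  rw [measure_mono_null (cyl_mono h y) (meas_cyl_eq_zero h0)]
  rfl

lemma cyl_split (X : ℕ → Ω → Fin N) (n : ℕ) (y : ℕ → Fin N) :
    cyl X n y = ⋃ j ∈ (univ : Finset (Fin N)),
      cyl X (n + 1) (fun k => if k = n + 1 then j else y k) := by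
  ext ω
  simp only [Set.mem_iUnion, mem_univ, exists_true_left, mem_cyl]
  constructor
  · intro hω
    refine ⟨X (n + 1) ω, fun k hk => ?_⟩
    by_cases hkn : k = n + 1
    · rw [if_pos hkn, hkn]
    · rw [if_neg hkn]; exact hω k (by omega)
  · rintro ⟨j, hω⟩ k hk
    have h2 := hω k (hk.trans n.le_succ)
    rwa [if_neg (by omega)] at h2

lemma pr_split (Q : Measure Ω) [IsFiniteMeasure Q] (X : ℕ → Ω → Fin N)
    (hX : ∀ n, Measurable (X n)) (n : ℕ) (y : ℕ → Fin N) :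
    pr Q X n y = ∑ j : Fin N, pr Q X (n + 1) (fun k => if k = n + 1 then j else y k) := by
  unfold pr
  rw [cyl_split X n y, measure_biUnion_finset ?_ fun j _ => measurableSet_cyl X hX _ _]
  · rw [ENNReal.toReal_sum fun j _ => measure_ne_top _ _]
  · intro a _ b _ hab
    exact cyl_disjoint (n + 1) le_rfl (by simpa using hab)

/-- The transition matrices. -/
noncomputable def PnAux (P : Measure Ω) (X : ℕ → Ω → Fin N)
    (P₀mat : Matrix (Fin N) (Fin N) ℝ) (n : ℕ) (ω : Ω) : Matrix (Fin N) (Fin N) ℝ :=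
  Matrix.of fun i j =>
    if n = 0 then P₀mat i j
    else
      if pr P X (n - 1) (fun k => if k = n - 1 then i else X k ω) = 0 then P₀mat i j
      else pr P X n (fun k => if k = n then j else if k = n - 1 then i else X k ω)
            / pr P X (n - 1) (fun k => if k = n - 1 then i else X k ω)

lemma PnAux_apply (P : Measure Ω) (X : ℕ → Ω → Fin N)
    (P₀mat : Matrix (Fin N) (Fin N) ℝ) (n : ℕ) (ω : Ω) (i j : Fin N) :
    PnAux P X P₀mat n ω i j =
      if n = 0 then P₀mat i j
      else
        if pr P X (n - 1) (fun k => if k = n - 1 then i else X k ω) = 0 then P₀mat i j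
        else pr P X n (fun k => if k = n then j else if k = n - 1 then i else X k ω)
              / pr P X (n - 1) (fun k => if k = n - 1 then i else X k ω) := rfl

/-- The value of `PnAux` along a path. -/
lemma PnAux_val (P : Measure Ω) (X : ℕ → Ω → Fin N) (P₀mat : Matrix (Fin N) (Fin N) ℝ)
    {k : ℕ} (hk : k ≠ 0) {y : ℕ → Fin N} {ω : Ω}
    (hω : ∀ k' ≤ k, k' ≠ k - 1 → k' ≠ k → X k' ω = y k')
    {i j : Fin N} (hik : i = y (k - 1)) (hj : j = y k) :
    PnAux P X P₀mat k ω i j =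
      if pr P X (k - 1) y = 0 then P₀mat (y (k - 1)) (y k)
      else pr P X k y / pr P X (k - 1) y := by
  rw [PnAux_apply, if_neg hk]
  have hden : pr P X (k - 1) (fun k' => if k' = k - 1 then i else X k' ω) = pr P X (k - 1) y := by
    refine pr_congr _ _ fun k' hk' => ?_
    by_cases h1 : k' = k - 1
    · rw [if_pos h1, h1, hik]
    · rw [if_neg h1]; exact hω k' (by omega) h1 (by omega)
  have hnum : pr P X k (fun k' => if k' = k then j else if k' = k - 1 then i else X k' ω)
      = pr P X k y := by
    refine pr_congr _ _ fun k' hk' => ?_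
    by_cases h1 : k' = k
    · rw [if_pos h1, h1, hj]
    · rw [if_neg h1]
      by_cases h2 : k' = k - 1
      · rw [if_pos h2, h2, hik]
      · rw [if_neg h2]; exact hω k' hk' h2 h1
  rw [hden, hnum, hik, hj]


lemma PnAux_nonneg (P : Measure Ω) (X : ℕ → Ω → Fin N) {P₀mat : Matrix (Fin N) (Fin N) ℝ}
    (h0 : ∀ i j, 0 ≤ P₀mat i j) (n : ℕ) (ω : Ω) (i j : Fin N) :
    0 ≤ PnAux P X P₀mat n ω i j := by
  rw [PnAux_apply]
  split_ifs
  · exact h0 i j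
  · exact h0 i j
  · exact div_nonneg (pr_nonneg _ _ _ _) (pr_nonneg _ _ _ _)

lemma PnAux_le_one (P : Measure Ω) [IsFiniteMeasure P] (X : ℕ → Ω → Fin N)
    {P₀mat : Matrix (Fin N) (Fin N) ℝ} (hst : IsStochasticMatrix P₀mat)
    (n : ℕ) (ω : Ω) (i j : Fin N) : PnAux P X P₀mat n ω i j ≤ 1 := by
  have hP1 : ∀ i j, P₀mat i j ≤ 1 := fun i j =>
    calc P₀mat i j ≤ ∑ j', P₀mat i j' :=
          Finset.single_le_sum (fun j' _ => hst.1 i j') (mem_univ j)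
    _ = 1 := hst.2 i
  rw [PnAux_apply]
  split_ifs with h0 h1
  · exact hP1 i j
  · exact hP1 i j
  · rw [div_le_one (lt_of_le_of_ne (pr_nonneg _ _ _ _) (Ne.symm h1))]
    calc pr P X n (fun k => if k = n then j else if k = n - 1 then i else X k ω)
        ≤ pr P X (n - 1) (fun k => if k = n then j else if k = n - 1 then i else X k ω) :=
          pr_mono P X (Nat.sub_le n 1) _
      _ = pr P X (n - 1) (fun k => if k = n - 1 then i else X k ω) := by
          refine pr_congr _ _ fun k hk => ?_
          rw [if_neg (by omega)]

lemma PnAux_row_sum (P : Measure Ω) [IsFiniteMeasure P] (X : ℕ → Ω → Fin N)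
    (hX : ∀ n, Measurable (X n)) {P₀mat : Matrix (Fin N) (Fin N) ℝ}
    (hst : IsStochasticMatrix P₀mat) {n : ℕ} (hn : n ≠ 0) (ω : Ω) (i : Fin N) :
    ∑ j, PnAux P X P₀mat n ω i j = 1 := by
  obtain ⟨mi, rfl⟩ := Nat.exists_eq_succ_of_ne_zero hn
  have hterm : ∀ j : Fin N, PnAux P X P₀mat (mi + 1) ω i j =
      if pr P X mi (fun k => if k = mi then i else X k ω) = 0 then P₀mat i j
      else pr P X (mi + 1) (fun k => if k = mi + 1 then j else if k = mi then i else X k ω)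
            / pr P X mi (fun k => if k = mi then i else X k ω) := fun j => by
    rw [PnAux_apply, if_neg (Nat.succ_ne_zero mi)]
    simp only [Nat.add_sub_cancel]
  rw [Finset.sum_congr rfl fun j _ => hterm j]
  by_cases h1 : pr P X mi (fun k => if k = mi then i else X k ω) = 0
  · calc ∑ j, _ = ∑ j, P₀mat i j := Finset.sum_congr rfl fun j _ => if_pos h1
    _ = 1 := hst.2 i
  · have hsplit := pr_split P X hX mi (fun k => if k = mi then i else X k ω)
    calc (∑ j, if pr P X mi (fun k => if k = mi then i else X k ω) = 0 then P₀mat i j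
            else pr P X (mi + 1) (fun k => if k = mi + 1 then j else if k = mi then i else X k ω)
              / pr P X mi (fun k => if k = mi then i else X k ω))
        = ∑ j, pr P X (mi + 1) (fun k => if k = mi + 1 then j else if k = mi then i else X k ω)
            / pr P X mi (fun k => if k = mi then i else X k ω) :=
          Finset.sum_congr rfl fun j _ => if_neg h1
      _ = (∑ j, pr P X (mi + 1) (fun k => if k = mi + 1 then j else if k = mi then i else X k ω))
            / pr P X mi (fun k => if k = mi then i else X k ω) := by rw [← Finset.sum_div]
      _ = 1 := by rw [← hsplit]; exact div_self h1

lemma measurable_of_factor (X : ℕ → Ω → Fin N) (hX : ∀ n, Measurable (X n)) (mi : ℕ)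
    {f : Ω → ℝ} (g : (Fin (mi + 1) → Fin N) → ℝ)
    (h : ∀ ω, f ω = g fun k => X (k : ℕ) ω) :
    Measurable[natFiltration X hX mi] f := by
  have hf : f = g ∘ fun ω (k : Fin (mi + 1)) => X (k : ℕ) ω := funext h
  rw [hf]
  have h2 : Measurable[(natFiltration X hX mi : MeasurableSpace Ω)]
      (fun ω (k : Fin (mi + 1)) => X (k : ℕ) ω) := by
    rw [natFiltration_eq]
    exact comap_measurable _
  exact Measurable.of_discrete.comp h2

lemma measurable_PnAux (P : Measure Ω) (X : ℕ → Ω → Fin N) (hX : ∀ n, Measurable (X n))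
    (P₀mat : Matrix (Fin N) (Fin N) ℝ) (mi : ℕ) (i j : Fin N) :
    Measurable[natFiltration X hX mi] fun ω => PnAux P X P₀mat (mi + 1) ω i j := by
  refine measurable_of_factor X hX mi
    (fun v => if pr P X mi (fun k => if k = mi then i else extv v k) = 0 then P₀mat i j
      else pr P X (mi + 1) (fun k => if k = mi + 1 then j else if k = mi then i else extv v k)
            / pr P X mi (fun k => if k = mi then i else extv v k)) (fun ω => ?_)
  rw [PnAux_apply, if_neg (Nat.succ_ne_zero mi)]
  have e1 : pr P X (mi + 1 - 1) (fun k => if k = mi + 1 - 1 then i else X k ω)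
      = pr P X mi (fun k => if k = mi then i else extv (fun k : Fin (mi + 1) => X (k : ℕ) ω) k) := by
    simp only [Nat.add_sub_cancel]
    refine pr_congr _ _ fun k hk => ?_
    by_cases h1 : k = mi
    · rw [if_pos h1, if_pos h1]
    · rw [if_neg h1, if_neg h1, extv_eq _ (by omega)]
  have e2 : pr P X (mi + 1) (fun k => if k = mi + 1 then j else if k = mi + 1 - 1 then i else X k ω)
      = pr P X (mi + 1) (fun k => if k = mi + 1 then j else if k = mi then i
          else extv (fun k : Fin (mi + 1) => X (k : ℕ) ω) k) := by
    simp only [Nat.add_sub_cancel]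
    refine pr_congr _ _ fun k hk => ?_
    by_cases h1 : k = mi + 1
    · rw [if_pos h1, if_pos h1]
    · rw [if_neg h1, if_neg h1]
      by_cases h2 : k = mi
      · rw [if_pos h2, if_pos h2]
      · rw [if_neg h2, if_neg h2, extv_eq _ (by omega)]
  rw [e1, e2]

lemma integrable_bounded (Q : Measure Ω) [IsFiniteMeasure Q] {f : Ω → ℝ}
    (hf : AEStronglyMeasurable f Q) (h0 : ∀ ω, 0 ≤ f ω) (h1 : ∀ ω, f ω ≤ 1) :
    Integrable f Q :=
  Integrable.mono' (integrable_const 1) hf (Filter.Eventually.of_forall fun ω => by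
    rw [Real.norm_eq_abs, abs_of_nonneg (h0 ω)]; exact h1 ω)

lemma ind_eq_indicator (X : ℕ → Ω → Fin N) (n : ℕ) (j : Fin N) :
    ind X n j = Set.indicator (X n ⁻¹' {j}) (fun _ => (1 : ℝ)) := by
  funext ω
  by_cases h : X n ω = j <;> simp [ind, h]

lemma integrable_ind (Q : Measure Ω) [IsFiniteMeasure Q] {X : ℕ → Ω → Fin N}
    (hX : ∀ n, Measurable (X n)) (n : ℕ) (j : Fin N) : Integrable (ind X n j) Q := by
  rw [ind_eq_indicator]
  exact (integrable_const 1).indicator (hX n (measurableSet_singleton j))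

lemma setIntegral_ind (Q : Measure Ω) [IsFiniteMeasure Q] {X : ℕ → Ω → Fin N}
    (hX : ∀ n, Measurable (X n)) {A : Set Ω} (n : ℕ) (j : Fin N) :
    ∫ ω in A, ind X n j ω ∂Q = (Q (A ∩ X n ⁻¹' {j})).toReal := by
  simp only [ind_eq_indicator X n j]
  rw [setIntegral_indicator (hX n (measurableSet_singleton j)), setIntegral_const, smul_eq_mul,
    mul_one]
  rfl

lemma cyl_inter (X : ℕ → Ω → Fin N) (n : ℕ) (y : ℕ → Fin N) (j : Fin N) :
    cyl X n y ∩ X (n + 1) ⁻¹' {j} = cyl X (n + 1) (fun k => if k = n + 1 then j else y k) := by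
  ext ω
  simp only [Set.mem_inter_iff, mem_cyl, Set.mem_preimage, Set.mem_singleton_iff]
  constructor
  · rintro ⟨h1, h2⟩ k hk
    by_cases hkn : k = n + 1
    · rw [if_pos hkn, hkn]; exact h2
    · rw [if_neg hkn]; exact h1 k (by omega)
  · intro h
    refine ⟨fun k hk => ?_, ?_⟩
    · have h3 := h k (by omega); rwa [if_neg (by omega)] at h3
    · have h3 := h (n + 1) le_rfl; rwa [if_pos rfl] at h3


lemma pr_succ_base (P₀ : Measure Ω) [IsProbabilityMeasure P₀] (X : ℕ → Ω → Fin N)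
    (hX : ∀ n, Measurable (X n)) (P₀mat : Matrix (Fin N) (Fin N) ℝ)
    (hMarkov₀ : IsMarkovChainWith P₀ (natFiltration X hX) X fun _ _ => P₀mat)
    (mi : ℕ) (y : ℕ → Fin N) :
    pr P₀ X (mi + 1) y = P₀mat (y mi) (y (mi + 1)) * pr P₀ X mi y := by
  have hle : (natFiltration X hX mi : MeasurableSpace Ω) ≤ m := (natFiltration X hX).le mi
  have hA := measurableSet_cyl X hX mi y
  have hA' := measurableSet_cyl' X hX mi y
  have h2 := hMarkov₀ (mi + 1) (by omega) (y (mi + 1))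
  simp only [Nat.add_sub_cancel] at h2
  have hset : cyl X (mi + 1) y = cyl X mi y ∩ X (mi + 1) ⁻¹' {y (mi + 1)} := by
    rw [cyl_inter]
    exact cyl_congr fun k hk => by by_cases h : k = mi + 1 <;> simp [h]
  calc pr P₀ X (mi + 1) y
      = (P₀ (cyl X mi y ∩ X (mi + 1) ⁻¹' {y (mi + 1)})).toReal := by rw [pr, hset]
    _ = ∫ ω in cyl X mi y, ind X (mi + 1) (y (mi + 1)) ω ∂P₀ :=
        (setIntegral_ind P₀ hX _ _).symm
    _ = ∫ ω in cyl X mi y, (P₀[ind X (mi + 1) (y (mi + 1)) | natFiltration X hX mi]) ω ∂P₀ :=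
        (setIntegral_condExp hle (integrable_ind P₀ hX _ _) hA').symm
    _ = ∫ ω in cyl X mi y, P₀mat (X mi ω) (y (mi + 1)) ∂P₀ :=
        setIntegral_congr_ae hA (h2.mono fun ω hω _ => hω)
    _ = ∫ ω in cyl X mi y, P₀mat (y mi) (y (mi + 1)) ∂P₀ :=
        setIntegral_congr_fun hA fun ω hω => by rw [hω mi le_rfl]
    _ = P₀mat (y mi) (y (mi + 1)) * pr P₀ X mi y := by
        rw [setIntegral_const, smul_eq_mul, mul_comm]; rfl

lemma key_atom (P : Measure Ω) [IsProbabilityMeasure P] (X : ℕ → Ω → Fin N)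
    (hX : ∀ n, Measurable (X n)) (P₀mat : Matrix (Fin N) (Fin N) ℝ)
    (mi : ℕ) (y : ℕ → Fin N) (j : Fin N) :
    ∫ ω in cyl X mi y, PnAux P X P₀mat (mi + 1) ω (X mi ω) j ∂P
      = ∫ ω in cyl X mi y, ind X (mi + 1) j ω ∂P := by
  set y' : ℕ → Fin N := fun k => if k = mi + 1 then j else y k with hy'
  have hcylcong : cyl X mi y = cyl X mi y' :=
    cyl_congr fun k hk => by simp only [hy']; rw [if_neg (by omega)]
  have hR : ∫ ω in cyl X mi y, ind X (mi + 1) j ω ∂P = pr P X (mi + 1) y' := by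
    rw [setIntegral_ind P hX, cyl_inter X mi y j]
    rfl
  have hc : ∀ ω ∈ cyl X mi y, PnAux P X P₀mat (mi + 1) ω (X mi ω) j
      = if pr P X mi y' = 0 then P₀mat (y' mi) (y' (mi + 1))
        else pr P X (mi + 1) y' / pr P X mi y' := by
    intro ω hω
    refine PnAux_val P X P₀mat (Nat.succ_ne_zero mi) (y := y') ?_ ?_ ?_
    · intro k' hk' h1 h2
      simp only [hy']
      rw [if_neg (by omega)]
      exact hω k' (by omega)
    · show X mi ω = y' mi
      simp only [hy']
      rw [if_neg (by omega)]
      exact hω mi le_rfl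
    · show j = y' (mi + 1)
      simp [hy']
  rw [setIntegral_congr_fun (measurableSet_cyl X hX mi y) hc, setIntegral_const, smul_eq_mul, hR]
  have hpry : (P (cyl X mi y)).toReal = pr P X mi y' := by rw [pr, hcylcong]
  rw [measureReal_def, hpry]
  by_cases h0 : pr P X mi y' = 0
  · rw [if_pos h0, h0, zero_mul]
    exact (pr_zero_mono (Nat.le_succ mi) h0).symm
  · rw [if_neg h0, mul_comm, div_mul_cancel₀ _ h0]

lemma markov_P (P : Measure Ω) [IsProbabilityMeasure P] (X : ℕ → Ω → Fin N)
    (hX : ∀ n, Measurable (X n)) (P₀mat : Matrix (Fin N) (Fin N) ℝ)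
    (hst : IsStochasticMatrix P₀mat) (mi : ℕ) (j : Fin N) :
    P[ind X (mi + 1) j | natFiltration X hX mi]
      =ᵐ[P] fun ω => PnAux P X P₀mat (mi + 1) ω (X mi ω) j := by
  have hle : (natFiltration X hX mi : MeasurableSpace Ω) ≤ m := (natFiltration X hX).le mi
  set g : Ω → ℝ := fun ω => PnAux P X P₀mat (mi + 1) ω (X mi ω) j with hg
  have hXmi : Measurable[natFiltration X hX mi] (X mi) :=
    Measurable.of_comap_le
      (le_iSup₂ (f := fun k' (_ : k' ∈ Set.Iic mi) => MeasurableSpace.comap (X k') inferInstance)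
        mi (Set.mem_Iic.mpr le_rfl))
  have hgm : Measurable[natFiltration X hX mi] g := by
    have hrep : g = fun ω => ∑ i, (ind X mi i ω) * PnAux P X P₀mat (mi + 1) ω i j := by
      funext ω
      simp only [hg]
      rw [Finset.sum_eq_single (X mi ω)]
      · rw [ind, if_pos rfl, one_mul]
      · intro i _ hne
        rw [ind, if_neg fun h => hne h.symm, zero_mul]
      · intro h; exact absurd (mem_univ _) h
    rw [hrep]
    refine Finset.measurable_sum univ fun i _ => Measurable.mul ?_ (measurable_PnAux P X hX P₀mat mi i j)
    rw [ind_eq_indicator]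
    exact measurable_const.indicator (hXmi (measurableSet_singleton i))
  have hgmeas' : AEStronglyMeasurable[(natFiltration X hX mi : MeasurableSpace Ω)] g P :=
    StronglyMeasurable.aestronglyMeasurable hgm.stronglyMeasurable
  have hgint : Integrable g P := by
    refine integrable_bounded P ((hgm.mono hle le_rfl).aestronglyMeasurable) ?_ ?_
    · intro ω; exact PnAux_nonneg P X (fun i j => hst.1 i j) _ _ _ _
    · intro ω; exact PnAux_le_one P X hst _ _ _ _
  refine (ae_eq_condExp_of_forall_setIntegral_eq hle (integrable_ind P hX _ _)
    (fun s hs hμs => hgint.integrableOn) (fun s hs hμs => ?_) hgmeas').symm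
  obtain ⟨V, rfl⟩ := exists_rep hs
  rw [integral_biUnion_finset V (fun v _ => measurableSet_cyl X hX mi _) (extv_pairwise X V)
      (fun v _ => hgint.integrableOn),
    integral_biUnion_finset V (fun v _ => measurableSet_cyl X hX mi _) (extv_pairwise X V)
      (fun v _ => (integrable_ind P hX _ _).integrableOn)]
  exact Finset.sum_congr rfl fun v _ => key_atom P X hX P₀mat mi (extv v) j


noncomputable def facL (P : Measure Ω) (X : ℕ → Ω → Fin N)
    (P₀mat : Matrix (Fin N) (Fin N) ℝ) (y : ℕ → Fin N) (n : ℕ) : ℝ :=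
  ∏ k ∈ Finset.Icc 1 n,
    (if pr P X (k - 1) y = 0 then P₀mat (y (k - 1)) (y k) else pr P X k y / pr P X (k - 1) y)
      / P₀mat (y (k - 1)) (y k)

lemma facL_nonneg (P : Measure Ω) (X : ℕ → Ω → Fin N) {P₀mat : Matrix (Fin N) (Fin N) ℝ}
    (hpos : ∀ i j, 0 < P₀mat i j) (y : ℕ → Fin N) (n : ℕ) : 0 ≤ facL P X P₀mat y n := by
  refine Finset.prod_nonneg fun k _ => div_nonneg ?_ (hpos _ _).le
  split_ifs
  · exact (hpos _ _).le
  · exact div_nonneg (pr_nonneg _ _ _ _) (pr_nonneg _ _ _ _)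

lemma pr_eq_facL (P P₀ : Measure Ω) [IsProbabilityMeasure P] [IsProbabilityMeasure P₀]
    (X : ℕ → Ω → Fin N) (hX : ∀ n, Measurable (X n)) (P₀mat : Matrix (Fin N) (Fin N) ℝ)
    (hpos : ∀ i j, 0 < P₀mat i j)
    (hMarkov₀ : IsMarkovChainWith P₀ (natFiltration X hX) X fun _ _ => P₀mat)
    (hInit : P.map (X 0) = P₀.map (X 0)) :
    ∀ n y, pr P X n y = facL P X P₀mat y n * pr P₀ X n y := by
  intro n
  induction n with
  | zero =>
    intro y
    have hcyl0 : cyl X 0 y = X 0 ⁻¹' {y 0} := by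
      ext ω
      simp only [mem_cyl, Nat.le_zero, Set.mem_preimage, Set.mem_singleton_iff]
      constructor
      · intro h; exact h 0 rfl
      · intro h k hk; rw [hk]; exact h
    have hPP : P (cyl X 0 y) = P₀ (cyl X 0 y) := by
      rw [hcyl0, ← Measure.map_apply (hX 0) (measurableSet_singleton _), hInit,
        Measure.map_apply (hX 0) (measurableSet_singleton _)]
    simp [facL, pr, hPP]
  | succ mi ih =>
    intro y
    have hQ : pr P₀ X (mi + 1) y = P₀mat (y mi) (y (mi + 1)) * pr P₀ X mi y :=
      pr_succ_base P₀ X hX P₀mat hMarkov₀ mi y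
    have hL : facL P X P₀mat y (mi + 1) = facL P X P₀mat y mi *
        ((if pr P X mi y = 0 then P₀mat (y mi) (y (mi + 1))
          else pr P X (mi + 1) y / pr P X mi y) / P₀mat (y mi) (y (mi + 1))) := by
      unfold facL
      rw [Finset.prod_Icc_succ_top (Nat.le_add_left 1 mi)]
      simp only [Nat.add_sub_cancel]
    by_cases h0 : pr P X mi y = 0
    · have h0' : pr P X (mi + 1) y = 0 := pr_zero_mono (Nat.le_succ mi) h0
      rw [h0', hL, hQ, if_pos h0, div_self (ne_of_gt (hpos _ _))]
      calc (0 : ℝ) = P₀mat (y mi) (y (mi + 1)) * pr P X mi y := by rw [h0, mul_zero]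
        _ = P₀mat (y mi) (y (mi + 1)) * (facL P X P₀mat y mi * pr P₀ X mi y) := by rw [ih y]
        _ = facL P X P₀mat y mi * 1 * (P₀mat (y mi) (y (mi + 1)) * pr P₀ X mi y) := by ring
    · rw [hL, hQ, if_neg h0]
      calc pr P X (mi + 1) y
          = pr P X mi y * (pr P X (mi + 1) y / pr P X mi y) := by
            rw [mul_comm, div_mul_cancel₀ _ h0]
        _ = (facL P X P₀mat y mi * pr P₀ X mi y) * (pr P X (mi + 1) y / pr P X mi y)
              * (P₀mat (y mi) (y (mi + 1)) / P₀mat (y mi) (y (mi + 1))) := by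
            rw [← ih y, div_self (ne_of_gt (hpos _ _)), mul_one]
        _ = facL P X P₀mat y mi * (pr P X (mi + 1) y / pr P X mi y / P₀mat (y mi) (y (mi + 1)))
              * (P₀mat (y mi) (y (mi + 1)) * pr P₀ X mi y) := by ring

lemma lr_on_atom (P : Measure Ω) (X : ℕ → Ω → Fin N) (P₀mat : Matrix (Fin N) (Fin N) ℝ)
    {n : ℕ} {y : ℕ → Fin N} {ω : Ω} (hω : ω ∈ cyl X n y) :
    lr X (PnAux P X P₀mat) P₀mat n ω = facL P X P₀mat y n := by
  unfold lr facL
  refine Finset.prod_congr rfl fun k hk => ?_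
  rw [Finset.mem_Icc] at hk
  have h1 : X (k - 1) ω = y (k - 1) := hω (k - 1) (by omega)
  have h2 : X k ω = y k := hω k (by omega)
  rw [PnAux_val P X P₀mat (by omega) (y := y) (fun k' hk' _ _ => hω k' (by omega)) h1 h2, h1, h2]

end DGaux

/-- If `X` is, under `P₀`, a stationary Markov chain with respect to its
natural filtration with constant transition matrix `P₀mat` having strictly positive entries,
and `P` is a probability measure with `P ≪ P₀` on `σ(X n : n ∈ ℕ)` and the same initial
distribution, then there exist `F (n-1)`-measurable random stochastic matrices `Pn n` such
that `X` is a Markov chain with transition matrices `Pn` under `P`, and for every `n` the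
density of `P` with respect to `P₀` on `F n` is
`∏_{k=1}^n Pn k (X (k-1), X k) / P₀mat (X (k-1), X k)`. -/
theorem discrete_girsanov_necessity
    {Ω : Type*} [m : MeasurableSpace Ω] {N : ℕ} (hN : 1 ≤ N)
    (X : ℕ → Ω → Fin N) (hX : ∀ n, Measurable (X n))
    (P P₀ : Measure Ω) [IsProbabilityMeasure P] [IsProbabilityMeasure P₀]
    (P₀mat : Matrix (Fin N) (Fin N) ℝ)
    (hP₀_stoch : IsStochasticMatrix P₀mat)
    (hP₀_pos : ∀ i j, 0 < P₀mat i j)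
    (hMarkov₀ : IsMarkovChainWith P₀ (natFiltration X hX) X fun _ _ => P₀mat)
    (hInit : P.map (X 0) = P₀.map (X 0))
    (hAC : P.trim (show (⨆ n, ((natFiltration X hX) n : MeasurableSpace Ω)) ≤ m from
        iSup_le fun n => (natFiltration X hX).le n) ≪
      P₀.trim (show (⨆ n, ((natFiltration X hX) n : MeasurableSpace Ω)) ≤ m from
        iSup_le fun n => (natFiltration X hX).le n)) :
    ∃ Pn : ℕ → Ω → Matrix (Fin N) (Fin N) ℝ,
      (∀ n, 1 ≤ n → ∀ i j,
        Measurable[(natFiltration X hX) (n - 1)] fun ω => Pn n ω i j) ∧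
      (∀ n, 1 ≤ n → ∀ ω, IsStochasticMatrix (Pn n ω)) ∧
      IsMarkovChainWith P (natFiltration X hX) X Pn ∧
      ∀ n : ℕ, ∀ s : Set Ω, MeasurableSet[(natFiltration X hX) n] s →
        P s = ∫⁻ ω in s, ENNReal.ofReal (lr X Pn P₀mat n ω) ∂P₀ := by
  classical
  refine ⟨DGaux.PnAux P X P₀mat, ?_, ?_, ?_, ?_⟩
  · intro n hn i j
    obtain ⟨mi, rfl⟩ := Nat.exists_eq_succ_of_ne_zero (by omega : n ≠ 0)
    simpa using DGaux.measurable_PnAux P X hX P₀mat mi i j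
  · intro n hn ω
    exact ⟨fun i j => DGaux.PnAux_nonneg P X (fun i j => (hP₀_pos i j).le) n ω i j,
      fun i => DGaux.PnAux_row_sum P X hX hP₀_stoch (by omega) ω i⟩
  · intro n hn j
    obtain ⟨mi, rfl⟩ := Nat.exists_eq_succ_of_ne_zero (by omega : n ≠ 0)
    simpa using DGaux.markov_P P X hX P₀mat hP₀_stoch mi j
  · intro n s hs
    obtain ⟨V, rfl⟩ := DGaux.exists_rep hs
    rw [measure_biUnion_finset (DGaux.extv_pairwise X V)
        (fun v _ => DGaux.measurableSet_cyl X hX n _),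
      lintegral_biUnion_finset (DGaux.extv_pairwise X V)
        (fun v _ => DGaux.measurableSet_cyl X hX n _)]
    refine Finset.sum_congr rfl fun v _ => ?_
    have hconst : ∫⁻ ω in DGaux.cyl X n (DGaux.extv v),
          ENNReal.ofReal (lr X (DGaux.PnAux P X P₀mat) P₀mat n ω) ∂P₀
        = ∫⁻ _ in DGaux.cyl X n (DGaux.extv v),
          ENNReal.ofReal (DGaux.facL P X P₀mat (DGaux.extv v) n) ∂P₀ :=
      setLIntegral_congr_fun (DGaux.measurableSet_cyl X hX n _)
        (fun ω hω => by rw [DGaux.lr_on_atom P X P₀mat hω])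
    rw [hconst, setLIntegral_const]
    have hkey := DGaux.pr_eq_facL P P₀ X hX P₀mat hP₀_pos hMarkov₀ hInit n (DGaux.extv v)
    calc P (DGaux.cyl X n (DGaux.extv v))
        = ENNReal.ofReal (DGaux.pr P X n (DGaux.extv v)) :=
          (ENNReal.ofReal_toReal (measure_ne_top _ _)).symm
      _ = ENNReal.ofReal (DGaux.facL P X P₀mat (DGaux.extv v) n)
            * ENNReal.ofReal (DGaux.pr P₀ X n (DGaux.extv v)) := by
          rw [hkey, ENNReal.ofReal_mul (DGaux.facL_nonneg P X hP₀_pos _ _)]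
      _ = ENNReal.ofReal (DGaux.facL P X P₀mat (DGaux.extv v) n)
            * P₀ (DGaux.cyl X n (DGaux.extv v)) := by
          rw [show DGaux.pr P₀ X n (DGaux.extv v)
              = (P₀ (DGaux.cyl X n (DGaux.extv v))).toReal from rfl,
            ENNReal.ofReal_toReal (measure_ne_top _ _)]
end

section
/- Let (F_n) be a filtration on a probability space, X an (F_n)-adapted process with values in S = {1,…,N}, and for each n ≥ 1 let P_n be an F_{n-1}-measurable random stochastic matrix. If for every vector z ∈ ℝ^N the process M_n^z = z_{X_n} − z_{X_0} − ∑_{k=1}^{n} ((P_k − I) z)_{X_{k-1}} is an (F_n)-martingale, then X is a Markov chain with transition matrices (P_n) with respect to (F_n), i.e. for every n ≥ 1 and every state j, P(X_n = j | F_{n-1}) = P_n(X_{n-1}, j) almost surely. -/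
open MeasureTheory Finset

/-- If `X` is adapted to a filtration `F`, the `Pn k` are
`F (k-1)`-measurable random stochastic matrices, and for every vector `z ∈ ℝ^N` the process
`M n = z (X n) - z (X 0) - ∑_{k=1}^n ((Pn k - I) z) (X (k-1))` is an `F`-martingale, then
`X` is a Markov chain with transition matrices `Pn` with respect to `F`:
`P(X n = j | F (n-1)) = Pn n (X (n-1), j)` a.s. for all `n ≥ 1` and all `j`. -/
theorem martingale_implies_markov
    {Ω : Type*} [m : MeasurableSpace Ω] {N : ℕ} (hN : 1 ≤ N)
    (F : Filtration ℕ m) (P : Measure Ω) [IsProbabilityMeasure P]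
    (X : ℕ → Ω → Fin N) (hX_adapted : ∀ n, Measurable[F n] (X n))
    (Pn : ℕ → Ω → Matrix (Fin N) (Fin N) ℝ)
    (hPn_meas : ∀ n, 1 ≤ n → ∀ i j, Measurable[F (n - 1)] fun ω => Pn n ω i j)
    (hPn_stoch : ∀ n, 1 ≤ n → ∀ ω, IsStochasticMatrix (Pn n ω))
    (hMart : ∀ z : Fin N → ℝ,
      Martingale
        (fun n ω => z (X n ω) - z (X 0 ω) -
          ∑ k ∈ Finset.Icc 1 n, ((∑ j, Pn k ω (X (k - 1) ω) j * z j) - z (X (k - 1) ω)))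
        F P) :
    IsMarkovChainWith P F X Pn := by
  intro n hn j
  obtain ⟨mm, rfl⟩ : ∃ mm, n = mm + 1 := ⟨n - 1, (Nat.succ_pred_eq_of_pos hn).symm⟩
  have hsub : mm + 1 - 1 = mm := rfl
  rw [hsub]
  set z : Fin N → ℝ := fun i => if i = j then 1 else 0 with hz
  have hM := hMart z
  set M : ℕ → Ω → ℝ := fun n ω => z (X n ω) - z (X 0 ω) -
      ∑ k ∈ Finset.Icc 1 n, ((∑ j', Pn k ω (X (k - 1) ω) j' * z j') - z (X (k - 1) ω))
    with hMdef
  set g : Ω → ℝ := fun ω => Pn (mm + 1) ω (X mm ω) j with hgdef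
  -- sum against the indicator vector picks out column j
  have hsum : ∀ ω, (∑ j', Pn (mm + 1) ω (X mm ω) j' * z j') = g ω := by
    intro ω
    simp [hz, mul_ite, mul_one, mul_zero, Finset.sum_ite_eq', hgdef]
  -- pointwise identity
  have hpoint : ind X (mm + 1) j = fun ω => (M (mm + 1) ω - M mm ω) + g ω := by
    funext ω
    have hind : ind X (mm + 1) j ω = z (X (mm + 1) ω) := by simp [ind, hz]
    rw [hind]
    simp only [hMdef]
    rw [Finset.sum_Icc_succ_top (by omega : 1 ≤ mm + 1)]
    simp only [Nat.add_sub_cancel, hsum ω]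
    ring
  -- g is F mm - measurable
  have hgrep : g = fun ω => ∑ i, if X mm ω = i then Pn (mm + 1) ω i j else 0 := by
    funext ω
    simp [hgdef]
  have hgmeas : Measurable[F mm] g := by
    rw [hgrep]
    apply Finset.measurable_sum
    intro i _
    exact Measurable.ite ((hX_adapted mm) (measurableSet_singleton i))
      (hPn_meas (mm + 1) (by omega) i j) measurable_const
  have hgint : Integrable g P := by
    have hb : ∀ ω, ‖g ω‖ ≤ 1 := by
      intro ω
      obtain ⟨hpos, hrow⟩ := hPn_stoch (mm + 1) (by omega) ω
      rw [Real.norm_eq_abs, abs_of_nonneg (hpos _ _)]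
      calc Pn (mm + 1) ω (X mm ω) j ≤ ∑ j', Pn (mm + 1) ω (X mm ω) j' :=
            Finset.single_le_sum (fun j' _ => hpos _ j') (Finset.mem_univ j)
        _ = 1 := hrow _
    exact (integrable_const (1 : ℝ)).mono'
      ((hgmeas.mono (F.le mm) le_rfl).aestronglyMeasurable)
      (Filter.Eventually.of_forall hb)
  have hMint1 : Integrable (M (mm + 1)) P := hM.integrable (mm + 1)
  have hMint0 : Integrable (M mm) P := hM.integrable mm
  have h1 : P[ind X (mm + 1) j | F mm] =ᵐ[P]
      fun ω => (P[fun ω => M (mm + 1) ω - M mm ω | F mm]) ω + (P[g | F mm]) ω := by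
    rw [hpoint]
    exact condExp_add (hMint1.sub hMint0) hgint (F mm)
  have h2 : P[fun ω => M (mm + 1) ω - M mm ω | F mm] =ᵐ[P]
      fun ω => (P[M (mm + 1) | F mm]) ω - (P[M mm | F mm]) ω :=
    condExp_sub hMint1 hMint0 (F mm)
  have h3 : P[M (mm + 1) | F mm] =ᵐ[P] M mm := hM.condExp_ae_eq (Nat.le_succ mm)
  have h4 : P[M mm | F mm] =ᵐ[P] M mm := hM.condExp_ae_eq le_rfl
  have h5 : P[g | F mm] = g :=
    condExp_of_stronglyMeasurable (F.le mm) hgmeas.stronglyMeasurable hgint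
  refine h1.trans ?_
  rw [h5]
  filter_upwards [h2, h3, h4] with ω h2 h3 h4
  simp only [h2, h3, h4, hgdef]
  ring
end

section
/- Let X be a process with values in S = {1,…,N} on a probability space (Ω, 𝒜, P_0), with natural filtration F_n = σ(X_0,…,X_n). Fix n ≥ 1 and assume that the conditional law of X_n given F_{n-1} under P_0 is P_0(X_{n-1}, ·), where P_0 is a stochastic matrix with P_0(i,j) > 0 for all i,j. Then for every integrable F_n-measurable random variable Y_n with E_0[Y_n | F_{n-1}] = 0 a.s., there exist F_{n-1}-measurable real random variables G_{n,1},…,G_{n,N} such that Y_n = ∑_{j=1}^N G_{n,j} (𝟙{X_n = j} − P_0(X_{n-1}, j)), P_0-almost surely. -/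
open MeasureTheory Finset

/-- (Martingale-increment representation.) Fix `n ≥ 1`. If under `P₀` the
conditional law of `X n` given `F (n-1)` is `P₀mat (X (n-1), ·)` with `P₀mat` a stochastic
matrix with strictly positive entries, then every integrable `F n`-measurable random
variable `Y` with `E₀[Y | F (n-1)] = 0` a.s. admits a representation
`Y = ∑_j G j · (𝟙{X n = j} - P₀mat (X (n-1), j))` with `F (n-1)`-measurable coefficients. -/
theorem delta_basis_representation
    {Ω : Type*} [m : MeasurableSpace Ω] {N : ℕ} (hN : 1 ≤ N)
    (X : ℕ → Ω → Fin N) (hX : ∀ n, Measurable (X n))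
    (P₀ : Measure Ω) [IsProbabilityMeasure P₀]
    (n : ℕ) (hn : 1 ≤ n)
    (P₀mat : Matrix (Fin N) (Fin N) ℝ)
    (hP₀_stoch : IsStochasticMatrix P₀mat)
    (hP₀_pos : ∀ i j, 0 < P₀mat i j)
    (hCond : ∀ j : Fin N,
      P₀[ind X n j | (natFiltration X hX) (n - 1)]
        =ᵐ[P₀] fun ω => P₀mat (X (n - 1) ω) j)
    (Y : Ω → ℝ) (hY_int : Integrable Y P₀)
    (hY_meas : Measurable[(natFiltration X hX) n] Y)
    (hY_cond : P₀[Y | (natFiltration X hX) (n - 1)] =ᵐ[P₀] 0) :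
    ∃ G : Fin N → Ω → ℝ,
      (∀ j, Measurable[(natFiltration X hX) (n - 1)] (G j)) ∧
      Y =ᵐ[P₀] fun ω => ∑ j, G j ω * (ind X n j ω - P₀mat (X (n - 1) ω) j) := by
  classical
  set F := natFiltration X hX with hF
  set T : Ω → (Fin (n + 1) → Fin N) := fun ω i => X (i : ℕ) ω with hT
  -- `F n ≤ comap T`
  have hFn_le : F n ≤ MeasurableSpace.comap T inferInstance := by
    refine iSup₂_le fun k hk => ?_
    have hk' : k ≤ n := hk
    have hXk : X k = (fun v : Fin (n + 1) → Fin N => v ⟨k, Nat.lt_succ_of_le hk'⟩) ∘ T := rfl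
    rw [hXk, ← MeasurableSpace.comap_comp]
    exact MeasurableSpace.comap_mono ((measurable_pi_apply _).comap_le)
  have hYT : Measurable[MeasurableSpace.comap T inferInstance] Y :=
    hY_meas.mono hFn_le le_rfl
  -- Y is constant on fibers of T
  have hconst : ∀ ω₁ ω₂, T ω₁ = T ω₂ → Y ω₁ = Y ω₂ := by
    intro ω₁ ω₂ hTeq
    obtain ⟨A, -, hA⟩ := hYT (measurableSet_singleton (Y ω₁))
    have h1 : ω₁ ∈ T ⁻¹' A := by
      rw [hA]; exact rfl
    have h2 : ω₂ ∈ T ⁻¹' A := by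
      simp only [Set.mem_preimage] at h1 ⊢; rwa [← hTeq]
    rw [hA] at h2
    exact h2.symm
  -- factor Y through T
  set φ : (Fin (n + 1) → Fin N) → ℝ :=
    fun v => if h : ∃ ω, T ω = v then Y h.choose else 0 with hφ
  have hφT : ∀ ω, φ (T ω) = Y ω := by
    intro ω
    have h : ∃ ω', T ω' = T ω := ⟨ω, rfl⟩
    simp only [hφ, dif_pos h]
    exact hconst _ _ h.choose_spec
  have hφ_meas : Measurable φ := measurable_of_countable φ
  -- the coefficients
  set G : Fin N → Ω → ℝ :=
    fun j ω => φ (Function.update (T ω) (Fin.last n) j) with hG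
  have hTl : ∀ ω, T ω (Fin.last n) = X n ω := by
    intro ω; simp [hT]
  -- measurability of G j w.r.t. F (n-1)
  have hGmeas : ∀ j, Measurable[F (n - 1)] (G j) := by
    intro j
    have hH : Measurable[F (n - 1)] (fun ω => Function.update (T ω) (Fin.last n) j) := by
      refine (@measurable_pi_iff Ω (Fin (n + 1)) (fun _ => Fin N) (F (n - 1)) _ _).mpr fun i => ?_
      by_cases hi : i = Fin.last n
      · subst hi
        simp only [Function.update_self]
        exact measurable_const
      · simp only [Function.update_of_ne hi]
        have hilt : (i : ℕ) < n := by
          have := Fin.lt_last_iff_ne_last.mpr hi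
          exact this
        have hile : (i : ℕ) ≤ n - 1 := Nat.le_sub_one_of_lt hilt
        have hle : MeasurableSpace.comap (X (i : ℕ)) inferInstance ≤ F (n - 1) := by
          exact le_iSup₂ (f := fun k (_ : k ∈ Set.Iic (n - 1)) =>
            MeasurableSpace.comap (X k) inferInstance) (i : ℕ) hile
        exact measurable_iff_comap_le.mpr hle
    exact hφ_meas.comp hH
  -- G j · ind j = Y · ind j pointwise
  have hGind : ∀ j, (fun ω => G j ω * ind X n j ω) = fun ω => Y ω * ind X n j ω := by
    intro j
    funext ω
    by_cases h : X n ω = j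
    · have : Function.update (T ω) (Fin.last n) j = T ω := by
        rw [← h, ← hTl ω]
        exact Function.update_eq_self _ _
      simp only [hG, this, hφT]
    · simp [ind, h]
  -- ind is measurable and integrable
  have hind_meas : ∀ j, Measurable (ind X n j) := by
    intro j
    exact Measurable.ite (hX n (measurableSet_singleton j)) measurable_const measurable_const
  have hind_int : ∀ j, Integrable (ind X n j) P₀ := by
    intro j
    refine (integrable_const (1 : ℝ)).mono' (hind_meas j).aestronglyMeasurable ?_
    filter_upwards with ω
    simp only [ind]
    split <;> simp
  -- G j · ind j is integrable
  have hint : ∀ j, Integrable (fun ω => G j ω * ind X n j ω) P₀ := by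
    intro j
    rw [hGind j]
    refine hY_int.abs.mono' (hY_int.aestronglyMeasurable.mul
      (hind_meas j).aestronglyMeasurable) ?_
    filter_upwards with ω
    simp only [norm_mul, Real.norm_eq_abs, ind]
    split <;> simp [abs_nonneg]
  -- pull-out property
  have hpull : ∀ j, P₀[(fun ω => G j ω * ind X n j ω) | F (n - 1)]
      =ᵐ[P₀] fun ω => G j ω * P₀mat (X (n - 1) ω) j := by
    intro j
    have h := condExp_mul_of_stronglyMeasurable_left (μ := P₀) (m := F (n - 1))
      ((hGmeas j).stronglyMeasurable) (hint j) (hind_int j)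
    refine h.trans ?_
    filter_upwards [hCond j] with ω hω
    simp only [Pi.mul_apply]
    rw [hω]
  -- Y = ∑ j, G j · ind j pointwise
  have hYsum : Y = ∑ j, (fun ω => G j ω * ind X n j ω) := by
    funext ω
    rw [Finset.sum_apply]
    rw [Finset.sum_eq_single (X n ω)]
    · have : Function.update (T ω) (Fin.last n) (X n ω) = T ω := by
        rw [← hTl ω]; exact Function.update_eq_self _ _
      simp [hG, this, hφT, ind]
    · intro j _ hj
      simp [ind, if_neg (Ne.symm hj)]
    · intro h; exact absurd (Finset.mem_univ _) h
  -- conditional expectation of Y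
  have h1 : P₀[Y | F (n - 1)] =ᵐ[P₀] fun ω => ∑ j, G j ω * P₀mat (X (n - 1) ω) j := by
    rw [hYsum]
    refine (condExp_finset_sum (m := F (n - 1)) fun j _ => hint j).trans ?_
    have hall : ∀ᵐ ω ∂P₀, ∀ j : Fin N, (P₀[(fun ω => G j ω * ind X n j ω) | F (n - 1)]) ω
        = G j ω * P₀mat (X (n - 1) ω) j := ae_all_iff.mpr fun j => hpull j
    filter_upwards [hall] with ω hω
    rw [Finset.sum_apply]
    exact Finset.sum_congr rfl fun j _ => hω j
  have hzero : (fun ω => ∑ j, G j ω * P₀mat (X (n - 1) ω) j) =ᵐ[P₀] 0 :=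
    h1.symm.trans hY_cond
  refine ⟨G, hGmeas, ?_⟩
  filter_upwards [hzero] with ω h0
  have h0' : ∑ j, G j ω * P₀mat (X (n - 1) ω) j = 0 := h0
  have hYω : Y ω = ∑ j, G j ω * ind X n j ω := by
    rw [hYsum, Finset.sum_apply]
  simp only [mul_sub, Finset.sum_sub_distrib, h0', sub_zero]
  exact hYω
end
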